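/- arXiv:2010.14499 — 3 statements merged into one kernel-verified Lean document; each statement's English description precedes it below -/
import Mathlib

section
/- (Closed form of the least-squares solution in the Appendix Lemma.) In the linear-ensemble setup, assume additionally α > 0 and σ_j² > 0 for all j, and set T = ∑_{j=1}^{k} σ_j^{−2}. Then the vector w* ∈ ℝ^k defined by w*_j = α ‖y‖² σ_j^{−2} / (1 + α² ‖y‖² T) is the unique global minimizer of the function w ↦ ‖∑_{j=1}^{k} w_j φ_j − y‖², and every coordinate of w* is positive. -/
open scoped RealInnerProductSpace

lemma ensemble_norm_expand {n k : ℕ} (y : EuclideanSpace ℝ (Fin n)) (α : ℝ)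
    (ε : Fin k → EuclideanSpace ℝ (Fin n))
    (hεy : ∀ j, ⟪ε j, y⟫ = 0)
    (hεε : ∀ i j, i ≠ j → ⟪ε i, ε j⟫ = 0)
    (w : Fin k → ℝ) :
    ‖(∑ j, w j • (α • y + ε j)) - y‖ ^ 2
      = (α * ∑ j, w j - 1) ^ 2 * ‖y‖ ^ 2 + ∑ j, (w j) ^ 2 * ‖ε j‖ ^ 2 := by
  have hvec : (∑ j, w j • (α • y + ε j)) - y
      = (α * ∑ j, w j - 1) • y + ∑ j, w j • ε j := by
    have h1 : ∑ j, w j • (α • y + ε j)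
        = (α * ∑ j, w j) • y + ∑ j, w j • ε j := by
      rw [Finset.sum_congr rfl (fun j _ => smul_add (w j) (α • y) (ε j)),
        Finset.sum_add_distrib]
      congr 1
      rw [← Finset.sum_smul, smul_smul, mul_comm]
    rw [h1, sub_smul, one_smul]
    abel
  have hyv : ⟪y, ∑ j, w j • ε j⟫ = 0 := by
    rw [inner_sum]
    refine Finset.sum_eq_zero fun j _ => ?_
    rw [real_inner_smul_right, real_inner_comm, hεy j, mul_zero]
  have hv : ‖∑ j, w j • ε j‖ ^ 2 = ∑ j, (w j) ^ 2 * ‖ε j‖ ^ 2 := by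
    rw [← real_inner_self_eq_norm_sq, inner_sum]
    refine Finset.sum_congr rfl (fun j _ => ?_)
    rw [sum_inner, Finset.sum_eq_single j]
    · rw [real_inner_smul_left, real_inner_smul_right, real_inner_self_eq_norm_sq]
      ring
    · intro i _ hij
      rw [real_inner_smul_left, real_inner_smul_right, hεε i j hij]
      ring
    · intro h; exact absurd (Finset.mem_univ j) h
  rw [hvec, norm_add_sq_real, hv]
  have h0 : ⟪(α * ∑ j, w j - 1) • y, ∑ j, w j • ε j⟫ = 0 := by
    rw [real_inner_smul_left, hyv]; ring
  rw [h0, norm_smul]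
  simp only [Real.norm_eq_abs, mul_pow, sq_abs]
  ring

/-- closed form of the least-squares solution in the Appendix Lemma:
in the linear-ensemble setup with `α > 0` and `σ_j² = ‖ε_j‖² > 0`, the vector `w*` with
`w*_j = α ‖y‖² σ_j⁻² / (1 + α² ‖y‖² T)`, `T = ∑_j σ_j⁻²`, is the unique global minimizer
of `w ↦ ‖∑_j w_j φ_j − y‖²`, and every coordinate of `w*` is positive. -/
theorem linear_ensemble_least_squares_closed_form
    {n k : ℕ} (y : EuclideanSpace ℝ (Fin n)) (hy : y ≠ 0) (α : ℝ) (hα : 0 < α)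
    (ε : Fin k → EuclideanSpace ℝ (Fin n))
    (hεy : ∀ j, ⟪ε j, y⟫ = 0)
    (hεε : ∀ i j, i ≠ j → ⟪ε i, ε j⟫ = 0)
    (hσ : ∀ j, 0 < ‖ε j‖ ^ 2)
    (T : ℝ) (hT : T = ∑ j, (‖ε j‖ ^ 2)⁻¹)
    (wstar : Fin k → ℝ)
    (hwstar : ∀ j, wstar j = α * ‖y‖ ^ 2 * (‖ε j‖ ^ 2)⁻¹ / (1 + α ^ 2 * ‖y‖ ^ 2 * T)) :
    (∀ w : Fin k → ℝ, w ≠ wstar →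
      ‖(∑ j, wstar j • (α • y + ε j)) - y‖ ^ 2 <
        ‖(∑ j, w j • (α • y + ε j)) - y‖ ^ 2) ∧
    (∀ j, 0 < wstar j) := by
  set Y := ‖y‖ ^ 2 with hYdef
  have hY : 0 < Y := pow_pos (norm_pos_iff.mpr hy) 2
  have hTnn : 0 ≤ T := by
    rw [hT]; exact Finset.sum_nonneg fun j _ => (inv_pos.mpr (hσ j)).le
  have hD : 0 < 1 + α ^ 2 * Y * T := by positivity
  set c : ℝ := α * Y / (1 + α ^ 2 * Y * T) with hcdef
  have hc : 0 < c := by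
    rw [hcdef]; exact div_pos (mul_pos hα hY) hD
  have hcD : c * (1 + α ^ 2 * Y * T) = α * Y := by
    rw [hcdef]; field_simp
  have hwc : ∀ j, wstar j = c * (‖ε j‖ ^ 2)⁻¹ := by
    intro j; rw [hwstar j, hcdef]; ring
  have hwpos : ∀ j, 0 < wstar j := fun j => by
    rw [hwc j]; exact mul_pos hc (inv_pos.mpr (hσ j))
  refine ⟨fun w hw => ?_, hwpos⟩
  rw [ensemble_norm_expand y α ε hεy hεε, ensemble_norm_expand y α ε hεy hεε, ← hYdef]
  set S := ∑ j, w j with hSdef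
  have hSstar : ∑ j, wstar j = c * T := by
    rw [hT, Finset.mul_sum]
    exact Finset.sum_congr rfl fun j _ => hwc j
  have hQstar : ∑ j, (wstar j) ^ 2 * ‖ε j‖ ^ 2 = c ^ 2 * T := by
    rw [hT, Finset.mul_sum]
    refine Finset.sum_congr rfl fun j _ => ?_
    have hs : ‖ε j‖ ^ 2 ≠ 0 := (hσ j).ne'
    rw [hwc j]
    field_simp
  have hcross : ∑ j, w j * wstar j * ‖ε j‖ ^ 2 = c * S := by
    rw [hSdef, Finset.mul_sum]
    refine Finset.sum_congr rfl fun j _ => ?_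
    have hs : ‖ε j‖ ^ 2 ≠ 0 := (hσ j).ne'
    rw [hwc j]
    field_simp
    have hn : ‖ε j‖ ≠ 0 := fun h => hs (by rw [h]; ring)
    ring_nf; field_simp
  set E := ∑ j, (w j - wstar j) ^ 2 * ‖ε j‖ ^ 2 with hEdef
  have hE : (∑ j, (w j) ^ 2 * ‖ε j‖ ^ 2) = E + 2 * (c * S) - c ^ 2 * T := by
    have h1 : E + 2 * (c * S) - c ^ 2 * T
        = ∑ j, ((w j - wstar j) ^ 2 * ‖ε j‖ ^ 2
            + 2 * (w j * wstar j * ‖ε j‖ ^ 2) - (wstar j) ^ 2 * ‖ε j‖ ^ 2) := by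
      rw [Finset.sum_sub_distrib, Finset.sum_add_distrib, ← Finset.mul_sum, hcross,
        hQstar, hEdef]
    rw [h1]
    exact Finset.sum_congr rfl fun j _ => by ring
  have hEpos : 0 < E := by
    have hne : ∃ j, w j ≠ wstar j := by
      by_contra h
      push_neg at h
      exact hw (funext h)
    obtain ⟨j0, hj0⟩ := hne
    refine Finset.sum_pos' (fun j _ => by positivity) ⟨j0, Finset.mem_univ j0, ?_⟩
    have h2 : 0 < (w j0 - wstar j0) ^ 2 := by
      have := sub_ne_zero.mpr hj0
      positivity
    exact mul_pos h2 (hσ j0)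
  rw [hE, hSstar, hQstar]
  have key : (α * S - 1) ^ 2 * Y + (E + 2 * (c * S) - c ^ 2 * T)
      = (α * (c * T) - 1) ^ 2 * Y + c ^ 2 * T + (α ^ 2 * Y * (S - c * T) ^ 2 + E) := by
    linear_combination (2 * (S - c * T)) * hcD
  rw [key]
  have hpos : 0 < α ^ 2 * Y * (S - c * T) ^ 2 + E :=
    add_pos_of_nonneg_of_pos (by positivity) hEpos
  linarith
end

section
/- (Appendix Lemma, conclusion.) In the linear-ensemble setup, assume additionally α > 0 and σ_j² > 0 for all j, and let w* be the (unique) minimizer of w ↦ ‖∑_{j=1}^{k} w_j φ_j − y‖². Then for all indices i and l: w*_i ≥ w*_l if and only if σ_i² ≤ σ_l², which holds if and only if ‖φ_i − y‖² ≤ ‖φ_l − y‖². In particular, any index maximizing the least-squares weight w*_i is exactly an index minimizing the individual model error ‖φ_i − y‖². -/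
open scoped RealInnerProductSpace

/-- Appendix Lemma, conclusion: in the linear-ensemble setup with
`α > 0` and `σ_j² = ‖ε_j‖² > 0`, if `w*` minimizes `w ↦ ‖∑_j w_j φ_j − y‖²`, then for
all indices `i, l`: `w*_i ≥ w*_l ↔ σ_i² ≤ σ_l² ↔ ‖φ_i − y‖² ≤ ‖φ_l − y‖²`. In
particular, an index maximizes the least-squares weight `w*` iff it minimizes the
individual model error `‖φ_i − y‖²`. -/
theorem linear_ensemble_max_weight_iff_min_error
    {n k : ℕ} (y : EuclideanSpace ℝ (Fin n)) (hy : y ≠ 0) (α : ℝ) (hα : 0 < α)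
    (ε : Fin k → EuclideanSpace ℝ (Fin n))
    (hεy : ∀ j, ⟪ε j, y⟫ = 0)
    (hεε : ∀ i j, i ≠ j → ⟪ε i, ε j⟫ = 0)
    (hσ : ∀ j, 0 < ‖ε j‖ ^ 2)
    (wstar : Fin k → ℝ)
    (hmin : ∀ w : Fin k → ℝ,
      ‖(∑ j, wstar j • (α • y + ε j)) - y‖ ^ 2 ≤ ‖(∑ j, w j • (α • y + ε j)) - y‖ ^ 2) :
    (∀ i l, ((wstar l ≤ wstar i ↔ ‖ε i‖ ^ 2 ≤ ‖ε l‖ ^ 2) ∧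
      (‖ε i‖ ^ 2 ≤ ‖ε l‖ ^ 2 ↔
        ‖(α • y + ε i) - y‖ ^ 2 ≤ ‖(α • y + ε l) - y‖ ^ 2))) ∧
    (∀ i, (∀ l, wstar l ≤ wstar i) ↔
      (∀ l, ‖(α • y + ε i) - y‖ ^ 2 ≤ ‖(α • y + ε l) - y‖ ^ 2)) := by
  have hyε : ∀ j, ⟪y, ε j⟫ = 0 := fun j => by rw [real_inner_comm]; exact hεy j
  have hy' : 0 < ‖y‖ := norm_pos_iff.mpr hy
  have hY : (0:ℝ) < ‖y‖ ^ 2 := by positivity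
  -- expansion of the loss
  have key : ∀ w : Fin k → ℝ, ‖(∑ j, w j • (α • y + ε j)) - y‖ ^ 2
      = (α * ∑ j, w j - 1) ^ 2 * ‖y‖ ^ 2 + ∑ j, (w j) ^ 2 * ‖ε j‖ ^ 2 := by
    intro w
    have h1 : (∑ j, w j • (α • y + ε j)) - y
        = (α * ∑ j, w j - 1) • y + ∑ j, w j • ε j := by
      simp only [smul_add, Finset.sum_add_distrib, smul_smul]
      rw [← Finset.sum_smul, sub_smul, one_smul, Finset.mul_sum,
        show (∑ i, w i * α) = ∑ i, α * w i from by simp [mul_comm]]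
      abel
    rw [h1, norm_add_sq_real]
    have h2 : ⟪(α * ∑ j, w j - 1) • y, ∑ j, w j • ε j⟫ = 0 := by
      rw [real_inner_smul_left, inner_sum]
      have h0 : ∀ j : Fin k, (⟪y, w j • ε j⟫ : ℝ) = 0 := fun j => by
        rw [real_inner_smul_right, hyε]; ring
      rw [Finset.sum_congr rfl fun j _ => h0 j, Finset.sum_const, smul_zero, mul_zero]
    have h3 : ‖∑ j, w j • ε j‖ ^ 2 = ∑ j, (w j) ^ 2 * ‖ε j‖ ^ 2 := by
      rw [← real_inner_self_eq_norm_sq, sum_inner]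
      refine Finset.sum_congr rfl fun i _ => ?_
      rw [inner_sum, Finset.sum_eq_single i]
      · rw [real_inner_smul_left, real_inner_smul_right, real_inner_self_eq_norm_sq]
        ring
      · intro j _ hj
        rw [real_inner_smul_left, real_inner_smul_right, hεε i j (Ne.symm hj)]
        ring
      · simp
    rw [h2, h3, norm_smul]
    simp [mul_pow, sq_abs]
  -- error formula
  have err : ∀ j, ‖(α • y + ε j) - y‖ ^ 2 = (α - 1) ^ 2 * ‖y‖ ^ 2 + ‖ε j‖ ^ 2 := by
    intro j
    have hv : (α • y + ε j) - y = (α - 1) • y + ε j := by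
      rw [sub_smul, one_smul]; abel
    rw [hv, norm_add_sq_real, real_inner_smul_left, hyε, norm_smul]
    simp [mul_pow, sq_abs]
  set S := ∑ j, wstar j with hS
  set Y := ‖y‖ ^ 2 with hYdef
  -- first-order conditions
  have foc : ∀ i, wstar i * ‖ε i‖ ^ 2 = α * Y * (1 - α * S) := by
    intro i
    set σ := ‖ε i‖ ^ 2 with hσdef
    have hσi : 0 < σ := hσ i
    set a : ℝ := α ^ 2 * Y + σ with hadef
    have hapos : 0 < a := by positivity
    set b : ℝ := α * Y * (α * S - 1) + wstar i * σ with hbdef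
    have hineq : ∀ u : ℝ, 0 ≤ a * u ^ 2 + 2 * b * u := by
      intro u
      have hm := hmin (Function.update wstar i (wstar i + u))
      rw [key, key] at hm
      have hsum : ∑ j, Function.update wstar i (wstar i + u) j = S + u := by
        rw [Finset.sum_update_of_mem (Finset.mem_univ i), hS,
          ← Finset.sum_erase_add _ _ (Finset.mem_univ i), Finset.sdiff_singleton_eq_erase]
        ring
      have hsq : ∑ j, (Function.update wstar i (wstar i + u) j) ^ 2 * ‖ε j‖ ^ 2
          = (∑ j, (wstar j) ^ 2 * ‖ε j‖ ^ 2) - (wstar i) ^ 2 * σ + (wstar i + u) ^ 2 * σ := by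
        have : ∀ j, (Function.update wstar i (wstar i + u) j) ^ 2 * ‖ε j‖ ^ 2
            = Function.update (fun j => (wstar j) ^ 2 * ‖ε j‖ ^ 2) i ((wstar i + u) ^ 2 * σ) j := by
          intro j
          by_cases hj : j = i
          · subst hj; simp [hσdef]
          · simp [Function.update_of_ne hj]
        rw [Finset.sum_congr rfl fun j _ => this j,
          Finset.sum_update_of_mem (Finset.mem_univ i),
          ← Finset.sum_erase_add _ _ (Finset.mem_univ i), Finset.sdiff_singleton_eq_erase]
        ring
      rw [hsum, hsq, ← hS] at hm
      rw [hadef, hbdef]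
      nlinarith [hm]
    have hb : b = 0 := by
      by_contra hb0
      have h1 := hineq (-b / a)
      have h2 : a * (-b / a) ^ 2 + 2 * b * (-b / a) = -(b ^ 2) / a := by
        field_simp; ring
      rw [h2] at h1
      have hb2 : 0 < b ^ 2 := by positivity
      have h3 : 0 < b ^ 2 / a := div_pos hb2 hapos
      rw [neg_div] at h1
      linarith
    rw [hbdef] at hb
    linarith
  -- the common value is positive
  have hcpos : 0 < α * Y * (1 - α * S) := by
    by_contra hc
    push_neg at hc
    have hw : ∀ j, wstar j ≤ 0 := fun j => by
      have := foc j
      nlinarith [hσ j]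
    have hS0 : S ≤ 0 := Finset.sum_nonpos fun j _ => hw j
    have h1 : α * S ≤ 0 := mul_nonpos_iff.mpr (Or.inl ⟨hα.le, hS0⟩)
    nlinarith [mul_pos hα hY, mul_nonneg (mul_pos hα hY).le (neg_nonneg.2 h1)]
  have hwpos : ∀ j, 0 < wstar j := by
    intro j
    have hj := foc j
    by_contra h
    push_neg at h
    nlinarith [hσ j]
  have pair1 : ∀ i l, wstar l ≤ wstar i ↔ ‖ε i‖ ^ 2 ≤ ‖ε l‖ ^ 2 := by
    intro i l
    have hi := foc i; have hl := foc l
    have hσi := hσ i; have hσl := hσ l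
    constructor
    · intro h
      nlinarith [hwpos i, hwpos l, mul_nonneg (sub_nonneg.2 h) hσl.le]
    · intro h
      nlinarith [hwpos i, hwpos l, mul_nonneg (sub_nonneg.2 h) (hwpos i).le]
  have pair2 : ∀ i l, ‖ε i‖ ^ 2 ≤ ‖ε l‖ ^ 2 ↔
      ‖(α • y + ε i) - y‖ ^ 2 ≤ ‖(α • y + ε l) - y‖ ^ 2 := by
    intro i l
    rw [err i, err l]
    constructor <;> intro h <;> linarith
  refine ⟨fun i l => ⟨pair1 i l, pair2 i l⟩, fun i => ⟨fun h l => ?_, fun h l => ?_⟩⟩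
  · exact (pair2 i l).1 ((pair1 i l).1 (h l))
  · exact (pair1 i l).2 ((pair2 i l).2 (h l))
end

section
/- (Proposition 3.) In the noisy linear-ensemble setup, assume additionally α > 0 and s_j := σ_j² + E[‖ζ_j‖²] > 0 for all j, and set T = ∑_{j=1}^{k} s_j^{−1}. Then the function w ↦ E[‖∑_{j=1}^{k} w_j (φ_j + ζ_j) − y‖²] has a unique global minimizer w*, given by w*_j = α ‖y‖² s_j^{−1} / (1 + α² ‖y‖² T), and for all indices i and l: w*_i ≥ w*_l if and only if E[‖φ_i + ζ_i − y‖²] ≤ E[‖φ_l + ζ_l − y‖²]. In particular, any index maximizing the optimal ensemble weight w*_i is exactly an index minimizing the expected individual model error, i.e. maximizing the lower bound L(D | M_i) on the log marginal likelihood. -/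
open MeasureTheory
open scoped RealInnerProductSpace

section AuxNLE

variable {n : ℕ} {Ω : Type*} [MeasurableSpace Ω] {P : Measure Ω}

lemma aux_int_inner {f g : Ω → EuclideanSpace ℝ (Fin n)}
    (hf : MemLp f 2 P) (hg : MemLp g 2 P) :
    Integrable (fun ω => ⟪f ω, g ω⟫) P := by
  have hb : Integrable (fun ω => (‖f ω‖ ^ 2 + ‖g ω‖ ^ 2) / 2) P :=
    (hf.norm.integrable_sq.add hg.norm.integrable_sq).div_const 2
  refine hb.mono' (hf.aestronglyMeasurable.inner hg.aestronglyMeasurable) ?_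
  filter_upwards with ω
  have h1 : |⟪f ω, g ω⟫| ≤ ‖f ω‖ * ‖g ω‖ := abs_real_inner_le_norm _ _
  have h2 : ‖f ω‖ * ‖g ω‖ ≤ (‖f ω‖ ^ 2 + ‖g ω‖ ^ 2) / 2 := by
    nlinarith [sq_nonneg (‖f ω‖ - ‖g ω‖)]
  simpa [Real.norm_eq_abs] using h1.trans h2

lemma aux_expand [IsProbabilityMeasure P] (c : EuclideanSpace ℝ (Fin n))
    {f : Ω → EuclideanSpace ℝ (Fin n)} (hf : MemLp f 2 P) (hf0 : ∫ ω, f ω ∂P = 0) :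
    ∫ ω, ‖c + f ω‖ ^ 2 ∂P = ‖c‖ ^ 2 + ∫ ω, ‖f ω‖ ^ 2 ∂P := by
  have hfi : Integrable f P := hf.integrable one_le_two
  have h1 : Integrable (fun ω => ⟪c, f ω⟫) P := hfi.const_inner c
  have h2 : Integrable (fun ω => ‖f ω‖ ^ 2) P := hf.norm.integrable_sq
  have key : ∀ ω, ‖c + f ω‖ ^ 2 = ‖c‖ ^ 2 + (2 * ⟪c, f ω⟫ + ‖f ω‖ ^ 2) := by
    intro ω
    rw [norm_add_sq_real]; ring
  simp_rw [key]
  have h1' : Integrable (fun ω => 2 * ⟪c, f ω⟫) P := h1.const_mul 2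
  have hA : Integrable (fun ω => 2 * ⟪c, f ω⟫ + ‖f ω‖ ^ 2) P := h1'.add h2
  rw [integral_add (integrable_const _) hA, integral_add h1' h2,
      integral_const_mul, integral_inner hfi,
      hf0, inner_zero_right, integral_const]
  simp

lemma aux_single [IsProbabilityMeasure P] (y : EuclideanSpace ℝ (Fin n)) (α : ℝ)
    (e : EuclideanSpace ℝ (Fin n)) (hey : ⟪e, y⟫ = 0)
    {f : Ω → EuclideanSpace ℝ (Fin n)} (hf : MemLp f 2 P) (hf0 : ∫ ω, f ω ∂P = 0) :
    ∫ ω, ‖(α • y + e) + f ω - y‖ ^ 2 ∂P =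
      (α - 1) ^ 2 * ‖y‖ ^ 2 + (‖e‖ ^ 2 + ∫ ω, ‖f ω‖ ^ 2 ∂P) := by
  have hpt : ∀ ω, (α • y + e) + f ω - y = ((α - 1) • y + e) + f ω := by
    intro ω
    rw [sub_smul, one_smul]
    abel
  simp_rw [hpt]
  rw [aux_expand _ hf hf0]
  have hc : ‖(α - 1) • y + e‖ ^ 2 = (α - 1) ^ 2 * ‖y‖ ^ 2 + ‖e‖ ^ 2 := by
    rw [norm_add_sq_real, norm_smul, real_inner_smul_left, real_inner_comm, hey]
    simp [mul_pow, sq_abs]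
  rw [hc]; ring

lemma aux_loss [IsProbabilityMeasure P] {k : ℕ}
    (y : EuclideanSpace ℝ (Fin n)) (α : ℝ)
    (ε : Fin k → EuclideanSpace ℝ (Fin n))
    (hεy : ∀ j, ⟪ε j, y⟫ = 0) (hεε : ∀ i j, i ≠ j → ⟪ε i, ε j⟫ = 0)
    (ζ : Fin k → Ω → EuclideanSpace ℝ (Fin n))
    (hζ : ∀ j, MemLp (ζ j) 2 P) (hζ0 : ∀ j, ∫ ω, ζ j ω ∂P = 0)
    (hζorth : ∀ i j, i ≠ j → ∫ ω, ⟪ζ i ω, ζ j ω⟫ ∂P = 0)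
    (w : Fin k → ℝ) :
    ∫ ω, ‖(∑ j, w j • ((α • y + ε j) + ζ j ω)) - y‖ ^ 2 ∂P =
      (α * ∑ j, w j - 1) ^ 2 * ‖y‖ ^ 2 +
        ∑ j, (w j) ^ 2 * (‖ε j‖ ^ 2 + ∫ ω, ‖ζ j ω‖ ^ 2 ∂P) := by
  set c : EuclideanSpace ℝ (Fin n) :=
    (α * ∑ j, w j - 1) • y + ∑ j, w j • ε j with hc
  set f : Ω → EuclideanSpace ℝ (Fin n) := fun ω => ∑ j, w j • ζ j ω with hfdef
  -- rearrange the vector pointwise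
  have hpt : ∀ ω, (∑ j, w j • ((α • y + ε j) + ζ j ω)) - y = c + f ω := by
    intro ω
    have h1 : ∑ j, w j • ((α • y + ε j) + ζ j ω)
        = (∑ j, w j • (α • y)) + (∑ j, w j • ε j) + ∑ j, w j • ζ j ω := by
      simp [smul_add, Finset.sum_add_distrib]
    have h2 : ∑ j, w j • (α • y) = (α * ∑ j, w j) • y := by
      rw [← Finset.sum_smul, mul_comm, mul_smul]
    rw [h1, h2, hc, hfdef, sub_smul, one_smul]
    abel
  -- f is MemLp 2 with zero mean
  have hfmem : MemLp f 2 P := by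
    rw [hfdef]
    exact memLp_finset_sum _ (fun j _ => (hζ j).const_smul (w j))
  have hf0 : ∫ ω, f ω ∂P = 0 := by
    have hInt : ∀ j : Fin k, Integrable (fun ω => w j • ζ j ω) P :=
      fun j => ((hζ j).integrable one_le_two).smul (w j)
    show (∫ ω, ∑ j, w j • ζ j ω ∂P) = 0
    rw [integral_finset_sum _ (fun j _ => hInt j)]
    simp only [integral_smul, hζ0, smul_zero, Finset.sum_const_zero]
  simp_rw [hpt]
  rw [aux_expand c hfmem hf0]
  -- compute ‖c‖²
  have hey : ⟪∑ j, w j • ε j, y⟫ = 0 := by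
    rw [sum_inner]
    exact Finset.sum_eq_zero fun j _ => by rw [real_inner_smul_left, hεy j, mul_zero]
  have hee : ‖∑ j, w j • ε j‖ ^ 2 = ∑ j, (w j) ^ 2 * ‖ε j‖ ^ 2 := by
    rw [← real_inner_self_eq_norm_sq, sum_inner]
    refine Finset.sum_congr rfl fun i _ => ?_
    rw [real_inner_smul_left, inner_sum]
    rw [Finset.sum_eq_single i]
    · rw [real_inner_smul_right, real_inner_self_eq_norm_sq]; ring
    · intro j _ hji
      rw [real_inner_smul_right, hεε i j (by exact fun h => hji h.symm)]
      ring
    · intro h; exact absurd (Finset.mem_univ i) h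
  have hcnorm : ‖c‖ ^ 2 = (α * ∑ j, w j - 1) ^ 2 * ‖y‖ ^ 2 + ∑ j, (w j) ^ 2 * ‖ε j‖ ^ 2 := by
    rw [hc, norm_add_sq_real, norm_smul, real_inner_smul_left, real_inner_comm, hey, hee]
    simp [mul_pow, sq_abs]
  -- compute ∫ ‖f‖²
  have hint : ∀ i j : Fin k, Integrable (fun ω => w i * (w j * ⟪ζ i ω, ζ j ω⟫)) P :=
    fun i j => ((aux_int_inner (hζ i) (hζ j)).const_mul (w j)).const_mul (w i)
  have hfnorm : ∫ ω, ‖f ω‖ ^ 2 ∂P = ∑ j, (w j) ^ 2 * ∫ ω, ‖ζ j ω‖ ^ 2 ∂P := by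
    have hptf : ∀ ω, ‖f ω‖ ^ 2 = ∑ i, ∑ j, w i * (w j * ⟪ζ i ω, ζ j ω⟫) := by
      intro ω
      rw [hfdef, ← real_inner_self_eq_norm_sq, sum_inner]
      refine Finset.sum_congr rfl fun i _ => ?_
      rw [real_inner_smul_left, inner_sum, Finset.mul_sum]
      refine Finset.sum_congr rfl fun j _ => ?_
      rw [real_inner_smul_right]
    simp_rw [hptf]
    rw [integral_finset_sum _ (fun i _ => integrable_finset_sum _ (fun j _ => hint i j))]
    refine Finset.sum_congr rfl fun i _ => ?_
    rw [integral_finset_sum _ (fun j _ => hint i j)]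
    rw [Finset.sum_eq_single i]
    · simp_rw [integral_const_mul]
      have : ∀ ω, ⟪ζ i ω, ζ i ω⟫ = ‖ζ i ω‖ ^ 2 := fun ω => real_inner_self_eq_norm_sq _
      simp_rw [this]
      ring
    · intro j _ hji
      simp_rw [integral_const_mul]
      rw [hζorth i j (fun h => hji h.symm)]
      ring
    · intro h; exact absurd (Finset.mem_univ i) h
  rw [hcnorm, hfnorm]
  have hsplit : ∑ j, (w j) ^ 2 * (‖ε j‖ ^ 2 + ∫ ω, ‖ζ j ω‖ ^ 2 ∂P)
      = (∑ j, (w j) ^ 2 * ‖ε j‖ ^ 2) + ∑ j, (w j) ^ 2 * ∫ ω, ‖ζ j ω‖ ^ 2 ∂P := by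
    rw [← Finset.sum_add_distrib]
    exact Finset.sum_congr rfl fun j _ => by ring
  rw [hsplit]
  ring

end AuxNLE

/-- Proposition 3: in the noisy linear-ensemble setup with `α > 0` and
`s_j = σ_j² + E[‖ζ_j‖²] > 0`, `T = ∑_j s_j⁻¹`, the expected squared loss
`w ↦ E[‖∑_j w_j (φ_j + ζ_j) − y‖²]` has a unique global minimizer `w*`, given by
`w*_j = α ‖y‖² s_j⁻¹ / (1 + α² ‖y‖² T)`, and `w*_i ≥ w*_l` iff
`E[‖φ_i + ζ_i − y‖²] ≤ E[‖φ_l + ζ_l − y‖²]`: an index maximizes the optimal ensemble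
weight iff it minimizes the expected individual model error (equivalently, maximizes the
lower bound `L(D | M_i)` on the log marginal likelihood). Here `φ_j = α • y + ε_j` and
`σ_j² = ‖ε_j‖²`. -/
theorem noisy_linear_ensemble_optimal_weights
    {n k : ℕ} {Ω : Type*} [MeasurableSpace Ω] (P : Measure Ω) [IsProbabilityMeasure P]
    (y : EuclideanSpace ℝ (Fin n)) (hy : y ≠ 0) (α : ℝ) (hα : 0 < α)
    (ε : Fin k → EuclideanSpace ℝ (Fin n))
    (hεy : ∀ j, ⟪ε j, y⟫ = 0)
    (hεε : ∀ i j, i ≠ j → ⟪ε i, ε j⟫ = 0)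
    (ζ : Fin k → Ω → EuclideanSpace ℝ (Fin n))
    (hζ : ∀ j, MemLp (ζ j) 2 P)
    (hζ0 : ∀ j, ∫ ω, ζ j ω ∂P = 0)
    (hζorth : ∀ i j, i ≠ j → ∫ ω, ⟪ζ i ω, ζ j ω⟫ ∂P = 0)
    (s : Fin k → ℝ) (hs : ∀ j, s j = ‖ε j‖ ^ 2 + ∫ ω, ‖ζ j ω‖ ^ 2 ∂P)
    (hs_pos : ∀ j, 0 < s j)
    (T : ℝ) (hT : T = ∑ j, (s j)⁻¹)
    (wstar : Fin k → ℝ)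
    (hwstar : ∀ j, wstar j = α * ‖y‖ ^ 2 * (s j)⁻¹ / (1 + α ^ 2 * ‖y‖ ^ 2 * T)) :
    (∀ w : Fin k → ℝ, w ≠ wstar →
      (∫ ω, ‖(∑ j, wstar j • ((α • y + ε j) + ζ j ω)) - y‖ ^ 2 ∂P) <
        ∫ ω, ‖(∑ j, w j • ((α • y + ε j) + ζ j ω)) - y‖ ^ 2 ∂P) ∧
    (∀ i l, wstar l ≤ wstar i ↔
      (∫ ω, ‖(α • y + ε i) + ζ i ω - y‖ ^ 2 ∂P) ≤
        ∫ ω, ‖(α • y + ε l) + ζ l ω - y‖ ^ 2 ∂P) := by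
  have hY : (0:ℝ) < ‖y‖ ^ 2 := by
    have : 0 < ‖y‖ := norm_pos_iff.mpr hy
    positivity
  set Y : ℝ := ‖y‖ ^ 2 with hYdef
  have hT0 : 0 ≤ T := by
    rw [hT]
    exact Finset.sum_nonneg fun j _ => inv_nonneg.mpr (hs_pos j).le
  set β : ℝ := 1 + α ^ 2 * Y * T with hβdef
  have hβ : 0 < β := by
    have h1 : 0 ≤ α ^ 2 * Y * T := mul_nonneg (mul_nonneg (sq_nonneg α) hY.le) hT0
    rw [hβdef]; linarith
  have key1 : ∀ j, wstar j * s j = α * Y / β := by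
    intro j
    rw [hwstar j]
    field_simp [(hs_pos j).ne']
  have hsum_wstar : ∑ j, wstar j = α * Y * T / β := by
    have h1 : ∀ j : Fin k, wstar j = (α * Y / β) * (s j)⁻¹ := fun j => by
      rw [hwstar j]; ring
    simp_rw [h1]
    rw [← Finset.mul_sum, ← hT]
    ring
  have key2 : α * (∑ j, wstar j) - 1 = -(1 / β) := by
    rw [hsum_wstar]
    field_simp
    rw [hβdef]
    ring
  constructor
  · -- part 1
    intro w hw
    rw [aux_loss y α ε hεy hεε ζ hζ hζ0 hζorth w,
        aux_loss y α ε hεy hεε ζ hζ hζ0 hζorth wstar]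
    simp_rw [← hs]
    set V : ℝ := ∑ j, (w j - wstar j) with hVdef
    have hS : ∑ j, w j = V + ∑ j, wstar j := by
      rw [hVdef, Finset.sum_sub_distrib]; ring
    have hsum : ∑ j, (w j) ^ 2 * s j
        = (∑ j, (wstar j) ^ 2 * s j) + (∑ j, (w j - wstar j) ^ 2 * s j)
          + 2 * (α * Y / β) * V := by
      rw [hVdef, Finset.mul_sum, ← Finset.sum_add_distrib, ← Finset.sum_add_distrib]
      refine Finset.sum_congr rfl fun j _ => ?_
      linear_combination (2 * (w j - wstar j)) * key1 j
    have hid : (α * ∑ j, w j - 1) ^ 2 * Y + ∑ j, (w j) ^ 2 * s j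
        = ((α * ∑ j, wstar j - 1) ^ 2 * Y + ∑ j, (wstar j) ^ 2 * s j)
          + α ^ 2 * Y * V ^ 2 + ∑ j, (w j - wstar j) ^ 2 * s j := by
      rw [hS]
      linear_combination hsum + (2 * α * Y * V) * key2
    have hBpos : 0 < ∑ j, (w j - wstar j) ^ 2 * s j := by
      obtain ⟨j, hj⟩ := Function.ne_iff.mp hw
      have hsq : 0 < (w j - wstar j) ^ 2 :=
        lt_of_le_of_ne (sq_nonneg _) (Ne.symm (pow_ne_zero 2 (sub_ne_zero.mpr hj)))
      have hjt : 0 < (w j - wstar j) ^ 2 * s j := mul_pos hsq (hs_pos j)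
      refine lt_of_lt_of_le hjt ?_
      exact Finset.single_le_sum (f := fun i => (w i - wstar i) ^ 2 * s i)
        (fun i _ => mul_nonneg (sq_nonneg _) (hs_pos i).le) (Finset.mem_univ j)
    have hA : 0 ≤ α ^ 2 * Y * V ^ 2 := by positivity
    rw [hid]
    simp only [← hYdef]
    linarith
  · -- part 2
    intro i l
    rw [aux_single y α (ε i) (hεy i) (hζ i) (hζ0 i),
        aux_single y α (ε l) (hεy l) (hζ l) (hζ0 l),
        show ‖ε i‖ ^ 2 + ∫ ω, ‖ζ i ω‖ ^ 2 ∂P = s i from (hs i).symm,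
        show ‖ε l‖ ^ 2 + ∫ ω, ‖ζ l ω‖ ^ 2 ∂P = s l from (hs l).symm,
        add_le_add_iff_left]
    rw [hwstar i, hwstar l]
    have hc : 0 < α * Y / β := by positivity
    constructor
    · intro h
      have h3 : α * Y / β * (s l)⁻¹ ≤ α * Y / β * (s i)⁻¹ := by
        calc α * Y / β * (s l)⁻¹ = α * Y * (s l)⁻¹ / β := by ring
          _ ≤ α * Y * (s i)⁻¹ / β := h
          _ = α * Y / β * (s i)⁻¹ := by ring
      have h2 : (s l)⁻¹ ≤ (s i)⁻¹ := le_of_mul_le_mul_left h3 hc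
      exact (inv_le_inv₀ (hs_pos l) (hs_pos i)).mp h2
    · intro h
      have h2 : (s l)⁻¹ ≤ (s i)⁻¹ := (inv_le_inv₀ (hs_pos l) (hs_pos i)).mpr h
      have h3 := mul_le_mul_of_nonneg_left h2 hc.le
      calc α * Y * (s l)⁻¹ / β = α * Y / β * (s l)⁻¹ := by ring
        _ ≤ α * Y / β * (s i)⁻¹ := h3
        _ = α * Y * (s i)⁻¹ / β := by ring
end
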